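/- The leaves of the Sol foliation of ℍ × ℍ, parametrized as (t,x,y) ↦ (x, e^{-t-s}/√2, y, e^{t-s}/√2), have shape operator (with respect to the unit normal field X = y₁ ∂_{y₁} + y₂ ∂_{y₂} and the half-product hyperbolic metric) with eigenvalues -1, -1, 0; the 0-eigendirection is spanned by the tangent vector ∂_t. -/

import Mathlib

/-- The normal field `X = y₁ ∂_{y₁} + y₂ ∂_{y₂}` on ℍ × ℍ ⊂ ℝ⁴ in coordinates
`(x₁, y₁, x₂, y₂)`. -/
def Xfield (p : ℝ × ℝ × ℝ × ℝ) : ℝ × ℝ × ℝ × ℝ := (0, p.2.1, 0, p.2.2.2)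

/-- The half-product hyperbolic metric on ℍ × ℍ applied to tangent vectors `u`, `w`
at the point `p`. -/
noncomputable def gMetric (p u w : ℝ × ℝ × ℝ × ℝ) : ℝ :=
  (u.1 * w.1 + u.2.1 * w.2.1) / (2 * p.2.1 ^ 2)
    + (u.2.2.1 * w.2.2.1 + u.2.2.2 * w.2.2.2) / (2 * p.2.2.2 ^ 2)

/-- The covariant derivative `∇_v X` of the normal field `X` with respect to the
Levi-Civita connection of the half-product hyperbolic metric, written in coordinates
via the Christoffel symbols of the hyperbolic metric on each factor
(`Γ^x_{xy} = -1/y`, `Γ^y_{xx} = 1/y`, `Γ^y_{yy} = -1/y`); since `X` is linear,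
`D_v X = (0, v₂, 0, v₄)`. This is the shape operator applied to `v`. -/
noncomputable def shapeOp (p v : ℝ × ℝ × ℝ × ℝ) : ℝ × ℝ × ℝ × ℝ :=
  (-(1 / p.2.1) * (v.1 * (Xfield p).2.1 + v.2.1 * (Xfield p).1),
   v.2.1 + (1 / p.2.1) * v.1 * (Xfield p).1 - (1 / p.2.1) * v.2.1 * (Xfield p).2.1,
   -(1 / p.2.2.2) * (v.2.2.1 * (Xfield p).2.2.2 + v.2.2.2 * (Xfield p).2.2.1),
   v.2.2.2 + (1 / p.2.2.2) * v.2.2.1 * (Xfield p).2.2.1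
     - (1 / p.2.2.2) * v.2.2.2 * (Xfield p).2.2.2)

/-- At every point `p = (x, e^{-t-s}/√2, y, e^{t-s}/√2)` of a leaf of the Sol foliation
of ℍ × ℍ, the field `X` is a unit normal, and the shape operator has eigenvalues
`-1, -1, 0`: the tangent vectors `∂_{x₁}` and `∂_{x₂}` are eigenvectors with eigenvalue
`-1`, and the `0`-eigendirection is spanned by the image of `∂_t`, namely
`(0, -e^{-t-s}/√2, 0, e^{t-s}/√2)`. -/
theorem shape_operator_leaf (t s x y : ℝ) :
    let p : ℝ × ℝ × ℝ × ℝ :=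
      (x, Real.exp (-t - s) / Real.sqrt 2, y, Real.exp (t - s) / Real.sqrt 2)
    gMetric p (Xfield p) (Xfield p) = 1 ∧
    shapeOp p (1, 0, 0, 0) = ((-1 : ℝ), 0, 0, 0) ∧
    shapeOp p (0, 0, 1, 0) = (0, 0, (-1 : ℝ), 0) ∧
    shapeOp p (0, -(Real.exp (-t - s) / Real.sqrt 2), 0, Real.exp (t - s) / Real.sqrt 2)
      = (0, 0, 0, 0) := by
  have h1 : Real.exp (-t - s) / Real.sqrt 2 ≠ 0 :=
    div_ne_zero (Real.exp_ne_zero _) (by positivity)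
  have h2 : Real.exp (t - s) / Real.sqrt 2 ≠ 0 :=
    div_ne_zero (Real.exp_ne_zero _) (by positivity)
  have hs : Real.sqrt 2 ^ 2 = 2 := Real.sq_sqrt (by norm_num)
  refine ⟨?_, ?_, ?_, ?_⟩ <;>
    simp only [gMetric, shapeOp, Xfield, Prod.mk.injEq] <;>
    field_simp <;> ring_nf <;> simp
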